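/- Let u, v, w, z be four distinct vertices of a simple graph G with {u,v}, {w,z} ∈ E(G). Then both sequences [uv][wz] and [wz][uv] are applicable to G (i.e. {w,z} ∈ E(G[uv]) and {u,v} ∈ E(G[wz])) if and only if the induced subgraph G[{u,v,w,z}] has an odd number of perfect matchings. -/

import Mathlib

set_option linter.unusedSectionVars false

variable {V : Type*} [Fintype V] [DecidableEq V]

/-- Local complementation at a vertex `w`: complement the edges within `N_G(w)`. -/
def SimpleGraph.localComp (G : SimpleGraph V) (w : V) : SimpleGraph V where
  Adj x y := x ≠ y ∧ Xor' (G.Adj x y) (G.Adj x w ∧ G.Adj y w)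
  symm := by
    constructor
    intro x y ⟨hne, hx⟩
    refine ⟨hne.symm, ?_⟩
    have h1 := G.adj_comm x y
    unfold Xor' Xor at hx ⊢
    tauto
  loopless := by constructor; intro x ⟨h, _⟩; exact h rfl

/-- `x ∼_G y` : `x = y` or `{x,y}` is an edge of `G`. -/
def SimpleGraph.nbr (G : SimpleGraph V) (x y : V) : Prop := x = y ∨ G.Adj x y

theorem SimpleGraph.nbr_comm (G : SimpleGraph V) (x y : V) : G.nbr x y ↔ G.nbr y x :=
  or_congr eq_comm (G.adj_comm x y)

private theorem xor_swap_right (a b c : Prop) : Xor' (Xor' a b) c ↔ Xor' (Xor' a c) b := by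
  unfold Xor' Xor; tauto

/-- The pivot `G[uv]` of `G` on an edge `{u,v}`, characterized by
`x ∼_{G[uv]} y ⟺ (x ∼_G y) XOR ((x ∼_G u) ∧ (y ∼_G v)) XOR ((x ∼_G v) ∧ (y ∼_G u))`. -/
def SimpleGraph.pivot (G : SimpleGraph V) (u v : V) : SimpleGraph V where
  Adj x y := x ≠ y ∧
    Xor' (Xor' (G.nbr x y) (G.nbr x u ∧ G.nbr y v)) (G.nbr x v ∧ G.nbr y u)
  symm := by
    constructor
    intro x y ⟨hne, hx⟩
    refine ⟨hne.symm, ?_⟩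
    show Xor' (Xor' (G.nbr y x) (G.nbr y u ∧ G.nbr x v)) (G.nbr y v ∧ G.nbr x u)
    rw [G.nbr_comm y x, and_comm (a := G.nbr y u) (b := G.nbr x v),
      and_comm (a := G.nbr y v) (b := G.nbr x u)]
    exact (xor_swap_right _ _ _).mp hx
  loopless := by constructor; intro x ⟨h, _⟩; exact h rfl

/-- Determinant over GF(2) of the adjacency matrix of the subgraph of `G` induced by `S`. -/
noncomputable def gdet (G : SimpleGraph V) (S : Finset V) : ZMod 2 := by
  classical
  exact Matrix.det (Matrix.of fun i j : S => if G.Adj i j then (1 : ZMod 2) else 0)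

/-- Apply a sequence of pivots (left to right). -/
def applyPivots (G : SimpleGraph V) : List (V × V) → SimpleGraph V
  | [] => G
  | p :: φ => applyPivots (G.pivot p.1 p.2) φ

/-- A sequence of pivots is applicable when each pair is an edge of the graph
obtained by applying all preceding pivots. -/
def PivotsApplicable (G : SimpleGraph V) : List (V × V) → Prop
  | [] => True
  | p :: φ => G.Adj p.1 p.2 ∧ PivotsApplicable (G.pivot p.1 p.2) φ

/-- The support of a sequence of pivots: vertices occurring an odd number of times. -/
def pivotSupport (φ : List (V × V)) : Finset V :=
  Finset.univ.filter fun x => Odd ((φ.flatMap fun p => [p.1, p.2]).count x)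

/-- A sequence of pivots is reduced if its pivot vertices are pairwise distinct. -/
def ReducedSeq (φ : List (V × V)) : Prop := (φ.flatMap fun p => [p.1, p.2]).Nodup

/-- The number of perfect matchings of the subgraph of `G` induced by `S`:
sets of edges of `G` inside `S` such that every vertex of `S` lies in exactly one of them. -/
noncomputable def pmCount (G : SimpleGraph V) (S : Finset V) : ℕ := by
  classical
  exact (Finset.univ.filter fun P : Finset (Sym2 V) =>
    (∀ e ∈ P, e ∈ G.edgeSet ∧ ∀ v ∈ e, v ∈ S) ∧
    ∀ v ∈ S, ∃! e, e ∈ P ∧ v ∈ e).card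

/-- Forward characterization: a perfect matching of the induced subgraph on four
distinct vertices containing `s(a,b)` must be `{s(a,b), s(c,d)}`. -/
lemma pm_char {G : SimpleGraph V} {a b c d : V} {S : Finset V}
    (hS : ∀ x, x ∈ S ↔ x = a ∨ x = b ∨ x = c ∨ x = d)
    (hac : a ≠ c) (had : a ≠ d) (hbc : b ≠ c) (hbd : b ≠ d)
    {P : Finset (Sym2 V)}
    (hP1 : ∀ e ∈ P, e ∈ G.edgeSet ∧ ∀ x ∈ e, x ∈ S)
    (hP2 : ∀ x ∈ S, ∃! e, e ∈ P ∧ x ∈ e)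
    (hmem : s(a,b) ∈ P) :
    P = {s(a,b), s(c,d)} ∧ G.Adj c d := by
  have hcS : c ∈ S := (hS c).mpr (by tauto)
  obtain ⟨f, ⟨hfP, hcf⟩, -⟩ := hP2 c hcS
  obtain ⟨d', hfd⟩ : ∃ y, f = s(c, y) := ⟨Sym2.Mem.other hcf, (Sym2.other_spec hcf).symm⟩
  subst hfd
  have hedge := hP1 _ hfP
  have hd'S : d' ∈ S := hedge.2 d' (Sym2.mem_mk_right c d')
  have hAdjcd' : G.Adj c d' := (SimpleGraph.mem_edgeSet G).mp hedge.1
  have hd'c : d' ≠ c := fun h => G.loopless.irrefl c (h ▸ hAdjcd')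
  have huniq : ∀ x ∈ S, ∀ e' ∈ P, x ∈ e' → ∀ e'' ∈ P, x ∈ e'' → e' = e'' :=
    fun x hx e' he' hxe' e'' he'' hxe'' => (hP2 x hx).unique ⟨he', hxe'⟩ ⟨he'', hxe''⟩
  have hd'a : d' ≠ a := by
    intro h
    have haS : a ∈ S := (hS a).mpr (by tauto)
    have heq := huniq a haS _ hfP (Sym2.mem_iff.mpr (Or.inr h.symm)) _ hmem
      (Sym2.mem_mk_left a b)
    rw [Sym2.eq_iff] at heq
    rcases heq with ⟨h1, _⟩ | ⟨h1, _⟩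
    · exact hac h1.symm
    · exact hbc h1.symm
  have hd'b : d' ≠ b := by
    intro h
    have hbS : b ∈ S := (hS b).mpr (by tauto)
    have heq := huniq b hbS _ hfP (Sym2.mem_iff.mpr (Or.inr h.symm)) _ hmem
      (Sym2.mem_mk_right a b)
    rw [Sym2.eq_iff] at heq
    rcases heq with ⟨h1, _⟩ | ⟨h1, _⟩
    · exact hac h1.symm
    · exact hbc h1.symm
  have hd'd : d' = d := by have := (hS d').mp hd'S; tauto
  rw [hd'd] at hfP hAdjcd'
  refine ⟨?_, hAdjcd'⟩
  apply Finset.Subset.antisymm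
  · intro g hg
    have hx : (Quot.out g).1 ∈ g := Sym2.out_fst_mem g
    have hxS := (hP1 g hg).2 _ hx
    rw [hS] at hxS
    simp only [Finset.mem_insert, Finset.mem_singleton]
    rcases hxS with h | h | h | h
    · exact Or.inl (huniq a ((hS a).mpr (by tauto)) g hg (h ▸ hx) _ hmem
        (Sym2.mem_mk_left a b))
    · exact Or.inl (huniq b ((hS b).mpr (by tauto)) g hg (h ▸ hx) _ hmem
        (Sym2.mem_mk_right a b))
    · exact Or.inr (huniq c ((hS c).mpr (by tauto)) g hg (h ▸ hx) _ hfP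
        (Sym2.mem_mk_left c d))
    · exact Or.inr (huniq d ((hS d).mpr (by tauto)) g hg (h ▸ hx) _ hfP
        (Sym2.mem_mk_right c d))
  · intro g hg
    simp only [Finset.mem_insert, Finset.mem_singleton] at hg
    rcases hg with rfl | rfl
    · exact hmem
    · exact hfP

/-- Backward: two disjoint edges form a perfect matching on their four endpoints. -/
lemma pm_of {G : SimpleGraph V} {a b c d : V} {S : Finset V}
    (hS : ∀ x, x ∈ S ↔ x = a ∨ x = b ∨ x = c ∨ x = d)
    (hac : a ≠ c) (had : a ≠ d) (hbc : b ≠ c) (hbd : b ≠ d)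
    (Hab : G.Adj a b) (Hcd : G.Adj c d) :
    (∀ e ∈ ({s(a,b), s(c,d)} : Finset (Sym2 V)), e ∈ G.edgeSet ∧ ∀ x ∈ e, x ∈ S) ∧
    ∀ x ∈ S, ∃! e, e ∈ ({s(a,b), s(c,d)} : Finset (Sym2 V)) ∧ x ∈ e := by
  have hab := Hab.ne
  have hcd := Hcd.ne
  constructor
  · intro e he
    simp only [Finset.mem_insert, Finset.mem_singleton] at he
    rcases he with rfl | rfl
    · refine ⟨Hab, fun x hx => ?_⟩
      rw [hS]; rcases Sym2.mem_iff.mp hx with rfl | rfl <;> tauto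
    · refine ⟨Hcd, fun x hx => ?_⟩
      rw [hS]; rcases Sym2.mem_iff.mp hx with rfl | rfl <;> tauto
  · intro x hx
    rw [hS] at hx
    rcases hx with h | h | h | h
    · refine ⟨s(a,b), ⟨by simp, Sym2.mem_iff.mpr (Or.inl h)⟩, ?_⟩
      rintro e ⟨he, hxe⟩
      simp only [Finset.mem_insert, Finset.mem_singleton] at he
      rcases he with rfl | rfl
      · rfl
      · rcases Sym2.mem_iff.mp hxe with h' | h'
        · exact absurd (h.symm.trans h') hac
        · exact absurd (h.symm.trans h') had
    · refine ⟨s(a,b), ⟨by simp, Sym2.mem_iff.mpr (Or.inr h)⟩, ?_⟩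
      rintro e ⟨he, hxe⟩
      simp only [Finset.mem_insert, Finset.mem_singleton] at he
      rcases he with rfl | rfl
      · rfl
      · rcases Sym2.mem_iff.mp hxe with h' | h'
        · exact absurd (h.symm.trans h') hbc
        · exact absurd (h.symm.trans h') hbd
    · refine ⟨s(c,d), ⟨by simp, Sym2.mem_iff.mpr (Or.inl h)⟩, ?_⟩
      rintro e ⟨he, hxe⟩
      simp only [Finset.mem_insert, Finset.mem_singleton] at he
      rcases he with rfl | rfl
      · rcases Sym2.mem_iff.mp hxe with h' | h'
        · exact absurd (h.symm.trans h').symm hac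
        · exact absurd (h.symm.trans h').symm hbc
      · rfl
    · refine ⟨s(c,d), ⟨by simp, Sym2.mem_iff.mpr (Or.inr h)⟩, ?_⟩
      rintro e ⟨he, hxe⟩
      simp only [Finset.mem_insert, Finset.mem_singleton] at he
      rcases he with rfl | rfl
      · rcases Sym2.mem_iff.mp hxe with h' | h'
        · exact absurd (h.symm.trans h').symm had
        · exact absurd (h.symm.trans h').symm hbd
      · rfl

lemma filter_univ_card {α : Type*} [Fintype α] (p : α → Prop) [DecidablePred p]
    (t : Finset α) (h : ∀ x, p x ↔ x ∈ t) : (Finset.univ.filter p).card = t.card := by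
  congr 1
  ext x
  simp [h x]

set_option maxHeartbeats 2000000 in
/-- for four distinct vertices with `{u,v}, {w,z} ∈ E(G)`, both `[uv][wz]`
and `[wz][uv]` are applicable to `G` iff `G[{u,v,w,z}]` has an odd number of
perfect matchings. -/
theorem both_applicable_iff_odd_pm (G : SimpleGraph V) (u v w z : V)
    (hd : [u, v, w, z].Nodup) (h1 : G.Adj u v) (h2 : G.Adj w z) :
    ((G.pivot u v).Adj w z ∧ (G.pivot w z).Adj u v) ↔ Odd (pmCount G {u, v, w, z}) := by
  simp only [List.nodup_cons, List.mem_cons, List.mem_singleton, List.not_mem_nil, or_false,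
    List.nodup_nil, and_true, not_or] at hd
  obtain ⟨⟨huv, huw, huz⟩, ⟨hvw, hvz⟩, hwz, -⟩ := hd
  have hS : ∀ x, x ∈ ({u, v, w, z} : Finset V) ↔ x = u ∨ x = v ∨ x = w ∨ x = z := by
    intro x; simp [Finset.mem_insert]
  -- Left-hand side simplification
  have nbr_ne : ∀ x y : V, x ≠ y → (G.nbr x y ↔ G.Adj x y) := by
    intro x y h; simp [SimpleGraph.nbr, h]
  have hL : ((G.pivot u v).Adj w z ∧ (G.pivot w z).Adj u v) ↔
      ((G.Adj u w ∧ G.Adj v z) ↔ (G.Adj u z ∧ G.Adj v w)) := by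
    have p1 : (G.pivot u v).Adj w z ↔ (w ≠ z ∧
        Xor' (Xor' (G.nbr w z) (G.nbr w u ∧ G.nbr z v)) (G.nbr w v ∧ G.nbr z u)) := Iff.rfl
    have p2 : (G.pivot w z).Adj u v ↔ (u ≠ v ∧
        Xor' (Xor' (G.nbr u v) (G.nbr u w ∧ G.nbr v z)) (G.nbr u z ∧ G.nbr v w)) := Iff.rfl
    rw [p1, p2,
      nbr_ne w u (fun h => huw h.symm), nbr_ne z v (fun h => hvz h.symm),
      nbr_ne w v (fun h => hvw h.symm), nbr_ne z u (fun h => huz h.symm),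
      nbr_ne u w huw, nbr_ne v z hvz, nbr_ne u z huz, nbr_ne v w hvw]
    have n1 : G.nbr u v ↔ True := iff_true_intro (Or.inr h1)
    have n2 : G.nbr w z ↔ True := iff_true_intro (Or.inr h2)
    rw [n1, n2]
    rw [G.adj_comm w u, G.adj_comm z v, G.adj_comm w v, G.adj_comm z u]
    have xl : ∀ a b : Prop, Xor' (Xor' True a) b ↔ (a ↔ b) := by
      intro a b; unfold Xor' Xor; tauto
    rw [xl, xl]
    constructor
    · rintro ⟨⟨-, hx⟩, -, hy⟩
      constructor
      · rintro ⟨p, q⟩; have := hx.mp ⟨p, q⟩; tauto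
      · rintro ⟨p, q⟩; have := hx.mpr ⟨q, p⟩; tauto
    · intro hx
      refine ⟨⟨hwz, ?_⟩, huv, ?_⟩
      · constructor
        · rintro ⟨p, q⟩; have := hx.mp ⟨p, q⟩; tauto
        · rintro ⟨p, q⟩; have := hx.mpr ⟨q, p⟩; tauto
      · exact hx
  rw [hL]
  -- Right-hand side: characterize perfect matchings
  have key : ∀ P : Finset (Sym2 V),
      ((∀ e ∈ P, e ∈ G.edgeSet ∧ ∀ x ∈ e, x ∈ ({u, v, w, z} : Finset V)) ∧
        ∀ x ∈ ({u, v, w, z} : Finset V), ∃! e, e ∈ P ∧ x ∈ e) ↔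
      (P = {s(u,v), s(w,z)} ∨ (G.Adj u w ∧ G.Adj v z ∧ P = {s(u,w), s(v,z)}) ∨
        (G.Adj u z ∧ G.Adj v w ∧ P = {s(u,z), s(v,w)})) := by
    intro P
    constructor
    · rintro ⟨hP1, hP2⟩
      obtain ⟨e, ⟨heP, hue⟩, -⟩ := hP2 u ((hS u).mpr (by tauto))
      obtain ⟨c', rfl⟩ : ∃ y, e = s(u, y) := ⟨Sym2.Mem.other hue, (Sym2.other_spec hue).symm⟩
      have hadj : G.Adj u c' := (SimpleGraph.mem_edgeSet G).mp (hP1 _ heP).1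
      have hc'S := (hP1 _ heP).2 c' (Sym2.mem_mk_right u c')
      rw [hS] at hc'S
      rcases hc'S with h | h | h | h
      · exact absurd h.symm hadj.ne
      · subst h
        exact Or.inl (pm_char hS huw huz hvw hvz hP1 hP2 heP).1
      · subst h
        have hc := pm_char (fun x => (hS x).trans (by tauto)) huv huz
          (fun h => hvw h.symm) hwz hP1 hP2 heP
        exact Or.inr (Or.inl ⟨hadj, hc.2, hc.1⟩)
      · subst h
        have hc := pm_char (fun x => (hS x).trans (by tauto)) huv huw
          (fun h => hvz h.symm) (fun h => hwz h.symm) hP1 hP2 heP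
        exact Or.inr (Or.inr ⟨hadj, hc.2, hc.1⟩)
    · rintro (rfl | ⟨ha, hb, rfl⟩ | ⟨ha, hb, rfl⟩)
      · exact pm_of hS huw huz hvw hvz h1 h2
      · exact pm_of (fun x => (hS x).trans (by tauto)) huv huz
          (fun h => hvw h.symm) hwz ha hb
      · exact pm_of (fun x => (hS x).trans (by tauto)) huv huw
          (fun h => hvz h.symm) (fun h => hwz h.symm) ha hb
  -- Distinctness of the three candidate matchings
  have h12 : ({s(u,v), s(w,z)} : Finset (Sym2 V)) ≠ {s(u,w), s(v,z)} := by
    intro h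
    have : s(u,v) ∈ ({s(u,w), s(v,z)} : Finset (Sym2 V)) := h ▸ Finset.mem_insert_self _ _
    simp only [Finset.mem_insert, Finset.mem_singleton, Sym2.eq_iff] at this
    tauto
  have h13 : ({s(u,v), s(w,z)} : Finset (Sym2 V)) ≠ {s(u,z), s(v,w)} := by
    intro h
    have : s(u,v) ∈ ({s(u,z), s(v,w)} : Finset (Sym2 V)) := h ▸ Finset.mem_insert_self _ _
    simp only [Finset.mem_insert, Finset.mem_singleton, Sym2.eq_iff] at this
    tauto
  have h23 : ({s(u,w), s(v,z)} : Finset (Sym2 V)) ≠ {s(u,z), s(v,w)} := by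
    intro h
    have : s(u,w) ∈ ({s(u,z), s(v,w)} : Finset (Sym2 V)) := h ▸ Finset.mem_insert_self _ _
    simp only [Finset.mem_insert, Finset.mem_singleton, Sym2.eq_iff] at this
    tauto
  unfold pmCount
  classical
  by_cases hA : G.Adj u w ∧ G.Adj v z <;> by_cases hB : G.Adj u z ∧ G.Adj v w
  · have hiff : ∀ P : Finset (Sym2 V),
        ((∀ e ∈ P, e ∈ G.edgeSet ∧ ∀ x ∈ e, x ∈ ({u, v, w, z} : Finset V)) ∧
          ∀ x ∈ ({u, v, w, z} : Finset V), ∃! e, e ∈ P ∧ x ∈ e) ↔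
        P ∈ ({{s(u,v), s(w,z)}, {s(u,w), s(v,z)}, {s(u,z), s(v,w)}} :
          Finset (Finset (Sym2 V))) := by
      intro P
      rw [key P]
      simp only [Finset.mem_insert, Finset.mem_singleton]
      tauto
    rw [filter_univ_card _ _ hiff, Finset.card_insert_of_notMem (by simp [h12, h13]),
      Finset.card_insert_of_notMem (by simp [h23]), Finset.card_singleton]
    exact iff_of_true (iff_of_true hA hB) ⟨1, rfl⟩
  · have hiff : ∀ P : Finset (Sym2 V),
        ((∀ e ∈ P, e ∈ G.edgeSet ∧ ∀ x ∈ e, x ∈ ({u, v, w, z} : Finset V)) ∧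
          ∀ x ∈ ({u, v, w, z} : Finset V), ∃! e, e ∈ P ∧ x ∈ e) ↔
        P ∈ ({{s(u,v), s(w,z)}, {s(u,w), s(v,z)}} : Finset (Finset (Sym2 V))) := by
      intro P
      rw [key P]
      simp only [Finset.mem_insert, Finset.mem_singleton]
      tauto
    rw [filter_univ_card _ _ hiff, Finset.card_insert_of_notMem (by simp [h12]),
      Finset.card_singleton]
    exact iff_of_false (fun h => hB (h.mp hA)) (by decide)
  · have hiff : ∀ P : Finset (Sym2 V),
        ((∀ e ∈ P, e ∈ G.edgeSet ∧ ∀ x ∈ e, x ∈ ({u, v, w, z} : Finset V)) ∧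
          ∀ x ∈ ({u, v, w, z} : Finset V), ∃! e, e ∈ P ∧ x ∈ e) ↔
        P ∈ ({{s(u,v), s(w,z)}, {s(u,z), s(v,w)}} : Finset (Finset (Sym2 V))) := by
      intro P
      rw [key P]
      simp only [Finset.mem_insert, Finset.mem_singleton]
      tauto
    rw [filter_univ_card _ _ hiff, Finset.card_insert_of_notMem (by simp [h13]),
      Finset.card_singleton]
    exact iff_of_false (fun h => hA (h.mpr hB)) (by decide)
  · have hiff : ∀ P : Finset (Sym2 V),
        ((∀ e ∈ P, e ∈ G.edgeSet ∧ ∀ x ∈ e, x ∈ ({u, v, w, z} : Finset V)) ∧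
          ∀ x ∈ ({u, v, w, z} : Finset V), ∃! e, e ∈ P ∧ x ∈ e) ↔
        P ∈ ({{s(u,v), s(w,z)}} : Finset (Finset (Sym2 V))) := by
      intro P
      rw [key P]
      simp only [Finset.mem_singleton]
      tauto
    rw [filter_univ_card _ _ hiff, Finset.card_singleton]
    exact iff_of_true (iff_of_false hA hB) ⟨0, rfl⟩
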